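/- (Perturbation bound) Let f_w be a d-layer feedforward ReLU network with weight matrices W_1, …, W_d and let U_1, …, U_d be perturbation matrices with ‖U_i‖₂ ≤ ‖W_i‖₂/d for each i. Then for any input x, |f_{w+u}(x) − f_w(x)|₂ ≤ e · |x|₂ · (∏_{i=1}^d ‖W_i‖₂) · ∑_{i=1}^d ‖U_i‖₂/‖W_i‖₂. -/

import Mathlib

set_option synthInstance.maxHeartbeats 1000000
set_option maxHeartbeats 1000000

/-- Coordinatewise ReLU on vectors. -/
noncomputable def reluV {n : ℕ} (v : EuclideanSpace ℝ (Fin n)) :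
    EuclideanSpace ℝ (Fin n) := WithLp.toLp 2 (fun i => max (v i) 0)

noncomputable def net {n : ℕ}
    (W : ℕ → EuclideanSpace ℝ (Fin n) →L[ℝ] EuclideanSpace ℝ (Fin n)) :
    ℕ → EuclideanSpace ℝ (Fin n) → EuclideanSpace ℝ (Fin n)
  | 0, x => x
  | 1, x => W 1 x
  | (i + 2), x => W (i + 2) (reluV (net W (i + 1) x))

lemma reluV_norm_le {n : ℕ} (v : EuclideanSpace ℝ (Fin n)) : ‖reluV v‖ ≤ ‖v‖ := by
  rw [EuclideanSpace.norm_eq, EuclideanSpace.norm_eq]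
  apply Real.sqrt_le_sqrt
  apply Finset.sum_le_sum
  intro i _
  have h : |max (v i) 0| ≤ |v i| := by
    have := abs_max_sub_max_le_abs (v i) 0 0
    simpa using this
  simpa [reluV, Real.norm_eq_abs] using pow_le_pow_left₀ (abs_nonneg _) h 2

lemma reluV_lipschitz {n : ℕ} (v w : EuclideanSpace ℝ (Fin n)) :
    ‖reluV v - reluV w‖ ≤ ‖v - w‖ := by
  rw [EuclideanSpace.norm_eq, EuclideanSpace.norm_eq]
  apply Real.sqrt_le_sqrt
  apply Finset.sum_le_sum
  intro i _
  have h : |max (v i) 0 - max (w i) 0| ≤ |v i - w i| := abs_max_sub_max_le_abs _ _ _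
  have h2 : (reluV v - reluV w) i = max (v i) 0 - max (w i) 0 := rfl
  have h3 : (v - w) i = v i - w i := rfl
  rw [h2, h3, Real.norm_eq_abs, Real.norm_eq_abs]
  exact pow_le_pow_left₀ (abs_nonneg _) h 2

lemma net_norm_le {n : ℕ}
    (W : ℕ → EuclideanSpace ℝ (Fin n) →L[ℝ] EuclideanSpace ℝ (Fin n))
    (x : EuclideanSpace ℝ (Fin n)) :
    ∀ k, ‖net W k x‖ ≤ (∏ i ∈ Finset.Icc 1 k, ‖W i‖) * ‖x‖ := by
  intro k
  induction k with
  | zero => simp [net]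
  | succ k ih =>
    match k, ih with
    | 0, _ =>
      simpa [net] using (W 1).le_opNorm x
    | (k+1), ih =>
      have : ‖net W (k+2) x‖ ≤ ‖W (k+2)‖ * ((∏ i ∈ Finset.Icc 1 (k+1), ‖W i‖) * ‖x‖) := by
        calc ‖net W (k+2) x‖ = ‖W (k+2) (reluV (net W (k+1) x))‖ := rfl
          _ ≤ ‖W (k+2)‖ * ‖reluV (net W (k+1) x)‖ := (W (k+2)).le_opNorm _
          _ ≤ ‖W (k+2)‖ * ‖net W (k+1) x‖ :=
              mul_le_mul_of_nonneg_left (reluV_norm_le _) (norm_nonneg _)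
          _ ≤ ‖W (k+2)‖ * ((∏ i ∈ Finset.Icc 1 (k+1), ‖W i‖) * ‖x‖) :=
              mul_le_mul_of_nonneg_left ih (norm_nonneg _)
      rw [Finset.prod_Icc_succ_top (by omega : 1 ≤ k + 2)]
      linarith [this]

lemma key_bound {n d : ℕ} (hd : 1 ≤ d)
    (W U : ℕ → EuclideanSpace ℝ (Fin n) →L[ℝ] EuclideanSpace ℝ (Fin n))
    (hW : ∀ i ∈ Finset.Icc 1 d, 0 < ‖W i‖)
    (hU : ∀ i ∈ Finset.Icc 1 d, ‖U i‖ ≤ ‖W i‖ / d)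
    (x : EuclideanSpace ℝ (Fin n)) :
    ∀ k, k ≤ d → ‖net (fun i => W i + U i) k x - net W k x‖ ≤
      (1 + 1/(d:ℝ))^k * (∏ i ∈ Finset.Icc 1 k, ‖W i‖) * ‖x‖ *
        ∑ i ∈ Finset.Icc 1 k, ‖U i‖ / ‖W i‖ := by
  have hd0 : (0:ℝ) < d := by exact_mod_cast hd
  have hc1 : (1:ℝ) ≤ 1 + 1/(d:ℝ) := by
    have := one_div_pos.mpr hd0
    linarith
  intro k
  induction k with
  | zero => simp [net]
  | succ k ih =>
    match k, ih with
    | 0, _ =>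
      intro h1d
      have h1 : (1:ℕ) ∈ Finset.Icc 1 d := Finset.mem_Icc.mpr ⟨le_refl _, hd⟩
      have hW1 := hW 1 h1
      have lhs : ‖net (fun i => W i + U i) 1 x - net W 1 x‖ = ‖U 1 x‖ := by
        show ‖(W 1 + U 1) x - W 1 x‖ = ‖U 1 x‖
        rw [ContinuousLinearMap.add_apply]
        congr 1
        abel
      rw [lhs]
      have : ‖U 1 x‖ ≤ ‖U 1‖ * ‖x‖ := (U 1).le_opNorm x
      simp only [Finset.Icc_self, Finset.prod_singleton, Finset.sum_singleton, zero_add, pow_one]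
      have heq : (1 + 1/(d:ℝ)) * ‖W 1‖ * ‖x‖ * (‖U 1‖ / ‖W 1‖) =
          (1 + 1/(d:ℝ)) * (‖U 1‖ * ‖x‖) := by
        field_simp
      rw [heq]
      nlinarith [mul_nonneg (norm_nonneg (U 1)) (norm_nonneg x), this]
    | (k+1), ih =>
      intro hk2
      have ihh := ih (by omega)
      have hk2mem : k + 2 ∈ Finset.Icc 1 d := Finset.mem_Icc.mpr ⟨by omega, hk2⟩
      have hWk := hW _ hk2mem
      have hUk := hU _ hk2mem
      set A := net (fun i => W i + U i) (k+1) x with hA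
      set B := net W (k+1) x with hB
      set c := (1 + 1/(d:ℝ)) with hcdef
      have hUW : ‖U (k+2)‖ ≤ ‖W (k+2)‖ * (1/(d:ℝ)) := by
        rw [mul_one_div]; exact hUk
      have split : net (fun i => W i + U i) (k+2) x - net W (k+2) x =
          (W (k+2) + U (k+2)) (reluV A - reluV B) + U (k+2) (reluV B) := by
        show (W (k+2) + U (k+2)) (reluV A) - W (k+2) (reluV B) = _
        simp [ContinuousLinearMap.add_apply, map_sub]
        abel
      have hrel : ‖reluV A - reluV B‖ ≤ ‖A - B‖ := reluV_lipschitz _ _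
      have hrelB : ‖reluV B‖ ≤ (∏ i ∈ Finset.Icc 1 (k+1), ‖W i‖) * ‖x‖ :=
        (reluV_norm_le B).trans (net_norm_le W x (k+1))
      set P := (∏ i ∈ Finset.Icc 1 (k+1), ‖W i‖) with hP
      set S := ∑ i ∈ Finset.Icc 1 (k+1), ‖U i‖ / ‖W i‖ with hS
      have hPnn : 0 ≤ P := Finset.prod_nonneg (fun i _ => norm_nonneg _)
      have hSnn : 0 ≤ S := Finset.sum_nonneg (fun i _ => div_nonneg (norm_nonneg _) (norm_nonneg _))
      have main : ‖net (fun i => W i + U i) (k+2) x - net W (k+2) x‖ ≤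
          (‖W (k+2)‖ + ‖U (k+2)‖) * ‖A - B‖ + ‖U (k+2)‖ * (P * ‖x‖) := by
        rw [split]
        calc ‖(W (k+2) + U (k+2)) (reluV A - reluV B) + U (k+2) (reluV B)‖
            ≤ ‖(W (k+2) + U (k+2)) (reluV A - reluV B)‖ + ‖U (k+2) (reluV B)‖ := norm_add_le _ _
          _ ≤ ‖W (k+2) + U (k+2)‖ * ‖reluV A - reluV B‖ + ‖U (k+2)‖ * ‖reluV B‖ := by
              gcongr
              · exact ContinuousLinearMap.le_opNorm _ _
              · exact ContinuousLinearMap.le_opNorm _ _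
          _ ≤ (‖W (k+2)‖ + ‖U (k+2)‖) * ‖A - B‖ + ‖U (k+2)‖ * (P * ‖x‖) := by
              gcongr
              · exact norm_add_le _ _
      -- bound ‖A - B‖ by ih
      have hAB : ‖A - B‖ ≤ c^(k+1) * P * ‖x‖ * S := ihh
      have hWU : ‖W (k+2)‖ + ‖U (k+2)‖ ≤ c * ‖W (k+2)‖ := by
        rw [hcdef]; nlinarith [hUW]
      -- goal RHS rewrite
      rw [Finset.prod_Icc_succ_top (by omega : 1 ≤ k + 2),
          Finset.sum_Icc_succ_top (by omega : 1 ≤ k + 2)]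
      have hABnn : (0:ℝ) ≤ ‖A - B‖ := norm_nonneg _
      have hcpos : (0:ℝ) < c := by rw [hcdef]; positivity
      have hcpow : (1:ℝ) ≤ c^(k+2) := one_le_pow₀ hc1
      have step1 : (‖W (k+2)‖ + ‖U (k+2)‖) * ‖A - B‖ ≤
          c * ‖W (k+2)‖ * (c^(k+1) * P * ‖x‖ * S) := by
        calc (‖W (k+2)‖ + ‖U (k+2)‖) * ‖A - B‖ ≤ (c * ‖W (k+2)‖) * ‖A - B‖ := by
              gcongr
          _ ≤ (c * ‖W (k+2)‖) * (c^(k+1) * P * ‖x‖ * S) :=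
              mul_le_mul_of_nonneg_left hAB (le_of_lt (mul_pos hcpos hWk))
      have step2 : ‖U (k+2)‖ * (P * ‖x‖) ≤
          c^(k+2) * ((‖U (k+2)‖ / ‖W (k+2)‖) * (P * ‖W (k+2)‖) * ‖x‖) := by
        have heq : (‖U (k+2)‖ / ‖W (k+2)‖) * (P * ‖W (k+2)‖) * ‖x‖ =
            ‖U (k+2)‖ * (P * ‖x‖) := by
          field_simp
        rw [heq]
        nlinarith [mul_nonneg (norm_nonneg (U (k+2))) (mul_nonneg hPnn (norm_nonneg x))]
      calc ‖net (fun i => W i + U i) (k+2) x - net W (k+2) x‖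
          ≤ (‖W (k+2)‖ + ‖U (k+2)‖) * ‖A - B‖ + ‖U (k+2)‖ * (P * ‖x‖) := main
        _ ≤ c * ‖W (k+2)‖ * (c^(k+1) * P * ‖x‖ * S) +
            c^(k+2) * ((‖U (k+2)‖ / ‖W (k+2)‖) * (P * ‖W (k+2)‖) * ‖x‖) :=
            add_le_add step1 step2
        _ = c^(k+2) * (P * ‖W (k+2)‖) * ‖x‖ * (S + ‖U (k+2)‖ / ‖W (k+2)‖) := by ring

theorem perturbation_bound (n d : ℕ) (hd : 1 ≤ d)
    (W U : ℕ → EuclideanSpace ℝ (Fin n) →L[ℝ] EuclideanSpace ℝ (Fin n))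
    (hW : ∀ i ∈ Finset.Icc 1 d, 0 < ‖W i‖)
    (hU : ∀ i ∈ Finset.Icc 1 d, ‖U i‖ ≤ ‖W i‖ / d)
    (x : EuclideanSpace ℝ (Fin n)) :
    ‖net (fun i => W i + U i) d x - net W d x‖ ≤
      Real.exp 1 * ‖x‖ * (∏ i ∈ Finset.Icc 1 d, ‖W i‖) *
        ∑ i ∈ Finset.Icc 1 d, ‖U i‖ / ‖W i‖ := by
  have hd0 : (0:ℝ) < d := by exact_mod_cast hd
  have hkey := key_bound hd W U hW hU x d le_rfl
  have hexp : (1 + 1/(d:ℝ))^d ≤ Real.exp 1 := by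
    calc (1 + 1/(d:ℝ))^d ≤ (Real.exp (1/(d:ℝ)))^d := by
          apply pow_le_pow_left₀ (by positivity)
          linarith [Real.add_one_le_exp (1/(d:ℝ))]
      _ = Real.exp ((d:ℝ) * (1/(d:ℝ))) := by rw [← Real.exp_nat_mul]
      _ = Real.exp 1 := by rw [mul_one_div, div_self hd0.ne']
  have hPnn : 0 ≤ ∏ i ∈ Finset.Icc 1 d, ‖W i‖ := Finset.prod_nonneg fun i _ => norm_nonneg _
  have hSnn : 0 ≤ ∑ i ∈ Finset.Icc 1 d, ‖U i‖ / ‖W i‖ :=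
    Finset.sum_nonneg fun i _ => div_nonneg (norm_nonneg _) (norm_nonneg _)
  calc ‖net (fun i => W i + U i) d x - net W d x‖
      ≤ (1 + 1/(d:ℝ))^d * (∏ i ∈ Finset.Icc 1 d, ‖W i‖) * ‖x‖ *
        ∑ i ∈ Finset.Icc 1 d, ‖U i‖ / ‖W i‖ := hkey
    _ ≤ Real.exp 1 * (∏ i ∈ Finset.Icc 1 d, ‖W i‖) * ‖x‖ *
        ∑ i ∈ Finset.Icc 1 d, ‖U i‖ / ‖W i‖ := by gcongr
    _ = Real.exp 1 * ‖x‖ * (∏ i ∈ Finset.Icc 1 d, ‖W i‖) *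
        ∑ i ∈ Finset.Icc 1 d, ‖U i‖ / ‖W i‖ := by ring
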